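/- arXiv:2109.05587 — 3 statements merged into one kernel-verified Lean document; each statement's English description precedes it below -/
import Mathlib

section
/- For the binary asymmetric channel with correct-transmission probabilities P₀, P₁ satisfying P₀ + P₁ > 1, the function f(α) = H_b(αP₁ + (1-α)(1-P₀)) - (1-α)H_b(P₀) - αH_b(P₁) on [0,1] attains its maximum at α* = (1/(P₀+P₁-1))·(1/(2^K + 1) - (1-P₀)), where K = (H_b(P₁) - H_b(P₀))/(P₀+P₁-1). -/
open Real

/-- Binary entropy function (base 2). -/
noncomputable def H2 (x : ℝ) : ℝ :=
  -(x * Real.logb 2 x) - (1 - x) * Real.logb 2 (1 - x)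

/-- Mutual information of the binary asymmetric channel with correct-transmission
probabilities `P₀, P₁`, as a function of the input probability `α` of symbol `1`. -/
noncomputable def bacMI (P₀ P₁ α : ℝ) : ℝ :=
  H2 (α * P₁ + (1 - α) * (1 - P₀)) - (1 - α) * H2 P₀ - α * H2 P₁

lemma keyA (K x : ℝ) (hx : x ∈ Set.Ioo (0 : ℝ) 1) :
    H2 x + K * (1 - x) ≤ Real.logb 2 (1 + (2 : ℝ) ^ K) := by
  obtain ⟨hx0, hx1⟩ := hx
  have hx1' : (0 : ℝ) < 1 - x := by linarith
  have h2pos : (0 : ℝ) < (2 : ℝ) ^ K := Real.rpow_pos_of_pos two_pos K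
  have ha : (1 / x : ℝ) ∈ Set.Ioi (0 : ℝ) := by
    simp [Set.mem_Ioi]; positivity
  have hb : ((2 : ℝ) ^ K / (1 - x)) ∈ Set.Ioi (0 : ℝ) := by
    simp [Set.mem_Ioi]; positivity
  have key := (strictConcaveOn_log_Ioi.concaveOn).2 ha hb hx0.le hx1'.le (by ring)
  simp only [smul_eq_mul] at key
  have e1 : x * (1 / x) + (1 - x) * ((2 : ℝ) ^ K / (1 - x)) = 1 + (2 : ℝ) ^ K := by
    field_simp
  rw [e1] at key
  have e2 : Real.log (1 / x) = -Real.log x := by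
    rw [one_div, Real.log_inv]
  have e3 : Real.log ((2 : ℝ) ^ K / (1 - x)) = K * Real.log 2 - Real.log (1 - x) := by
    rw [Real.log_div (by positivity) (by positivity), Real.log_rpow two_pos]
  rw [e2, e3] at key
  have hlog2 : (0 : ℝ) < Real.log 2 := Real.log_pos one_lt_two
  unfold H2
  rw [Real.logb, Real.logb, Real.logb, le_div_iff₀ hlog2]
  calc (-(x * (Real.log x / Real.log 2)) - (1 - x) * (Real.log (1 - x) / Real.log 2)
        + K * (1 - x)) * Real.log 2
      = x * (-Real.log x) + (1 - x) * (K * Real.log 2 - Real.log (1 - x)) := by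
        field_simp; ring
    _ ≤ Real.log (1 + (2 : ℝ) ^ K) := key

lemma keyB (K : ℝ) :
    H2 (1 / ((2 : ℝ) ^ K + 1)) + K * (1 - 1 / ((2 : ℝ) ^ K + 1))
      = Real.logb 2 (1 + (2 : ℝ) ^ K) := by
  have h2pos : (0 : ℝ) < (2 : ℝ) ^ K := Real.rpow_pos_of_pos two_pos K
  have hc : (0 : ℝ) < (2 : ℝ) ^ K + 1 := by linarith
  have e0 : 1 - 1 / ((2 : ℝ) ^ K + 1) = (2 : ℝ) ^ K / ((2 : ℝ) ^ K + 1) := by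
    field_simp; ring
  have e1 : Real.logb 2 (1 / ((2 : ℝ) ^ K + 1)) = -Real.logb 2 ((2 : ℝ) ^ K + 1) := by
    rw [one_div, Real.logb, Real.logb, Real.log_inv]; ring
  have e2 : Real.logb 2 ((2 : ℝ) ^ K / ((2 : ℝ) ^ K + 1))
      = K - Real.logb 2 ((2 : ℝ) ^ K + 1) := by
    rw [Real.logb, Real.logb, Real.log_div (by positivity) (by positivity),
      Real.log_rpow two_pos]
    field_simp
  have e3 : Real.logb 2 (1 + (2 : ℝ) ^ K) = Real.logb 2 ((2 : ℝ) ^ K + 1) := by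
    ring_nf
  unfold H2
  rw [e0, e1, e2, e3]
  field_simp
  ring

/-- The BAC mutual information `f(α)` on `[0,1]` attains its maximum at
`α* = (1/(P₀+P₁-1)) (1/(2^K+1) - (1-P₀))` where `K = (H_b(P₁)-H_b(P₀))/(P₀+P₁-1)`. -/
theorem bac_argmax
    (P₀ P₁ : ℝ) (hP₀ : P₀ ∈ Set.Ioo (0 : ℝ) 1) (hP₁ : P₁ ∈ Set.Ioo (0 : ℝ) 1)
    (hsum : 1 < P₀ + P₁)
    (K : ℝ) (hK : K = (H2 P₁ - H2 P₀) / (P₀ + P₁ - 1))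
    (αstar : ℝ)
    (hαstar : αstar = (1 / (P₀ + P₁ - 1)) * (1 / ((2 : ℝ) ^ K + 1) - (1 - P₀))) :
    ∀ α ∈ Set.Icc (0 : ℝ) 1, bacMI P₀ P₁ α ≤ bacMI P₀ P₁ αstar := by
  intro α hα
  obtain ⟨hα0, hα1⟩ := hα
  have hs : (0 : ℝ) < P₀ + P₁ - 1 := by linarith
  have h2pos : (0 : ℝ) < (2 : ℝ) ^ K := Real.rpow_pos_of_pos two_pos K
  have hKs : H2 P₁ - H2 P₀ = K * (P₀ + P₁ - 1) := by
    rw [hK]; field_simp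
  have hgs : αstar * P₁ + (1 - αstar) * (1 - P₀) = 1 / ((2 : ℝ) ^ K + 1) := by
    rw [hαstar]; field_simp; ring
  -- g lies in (0,1)
  have hg0 : (0 : ℝ) < α * P₁ + (1 - α) * (1 - P₀) := by
    nlinarith [mul_nonneg hα0 hs.le, hP₀.2]
  have hg1 : α * P₁ + (1 - α) * (1 - P₀) < 1 := by
    nlinarith [mul_nonneg (by linarith : (0:ℝ) ≤ 1 - α) hs.le, hP₁.2]
  have repr : ∀ β : ℝ, bacMI P₀ P₁ β =
      (H2 (β * P₁ + (1 - β) * (1 - P₀)) + K * (1 - (β * P₁ + (1 - β) * (1 - P₀))))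
        + (K * (1 - P₀) - H2 P₀ - K) := by
    intro β
    unfold bacMI
    linear_combination (-β) * hKs
  rw [repr α, repr αstar, hgs]
  have hA := keyA K (α * P₁ + (1 - α) * (1 - P₀)) ⟨hg0, hg1⟩
  have hB := keyB K
  linarith
end

section
/- The capacity of the binary asymmetric channel with correct-transmission probabilities P₀, P₁ (P₀ + P₁ > 1) equals log₂(1 + 2^K) - P₀·K - H_b(P₀), where K = (H_b(P₁) - H_b(P₀))/(P₀+P₁-1). -/
open Real

lemma H2_symm (x : ℝ) : H2 (1 - x) = H2 x := by
  unfold H2; ring_nf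

/-- Tangent-line (Gibbs) inequality for the binary entropy. -/
lemma H2_tangent {p q : ℝ} (hp : p ∈ Set.Ioo (0:ℝ) 1) (hq : q ∈ Set.Ioo (0:ℝ) 1) :
    H2 q ≤ H2 p + (q - p) * Real.logb 2 ((1 - p) / p) := by
  obtain ⟨hp0, hp1⟩ := hp
  obtain ⟨hq0, hq1⟩ := hq
  have hp1' : 0 < 1 - p := by linarith
  have hq1' : 0 < 1 - q := by linarith
  have hlog2 : (0:ℝ) < Real.log 2 := Real.log_pos (by norm_num)
  have h1 : Real.log (p / q) ≤ p / q - 1 := Real.log_le_sub_one_of_pos (by positivity)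
  have h2 : Real.log ((1 - p) / (1 - q)) ≤ (1 - p) / (1 - q) - 1 :=
    Real.log_le_sub_one_of_pos (by positivity)
  have h1' : q * Real.log (p / q) ≤ p - q := by
    have := mul_le_mul_of_nonneg_left h1 hq0.le
    have e : q * (p / q - 1) = p - q := by field_simp
    linarith [this, e ▸ this]
  have h2' : (1 - q) * Real.log ((1 - p) / (1 - q)) ≤ q - p := by
    have := mul_le_mul_of_nonneg_left h2 hq1'.le
    have e : (1 - q) * ((1 - p) / (1 - q) - 1) = q - p := by field_simp; ring
    linarith [this, e ▸ this]
  rw [Real.log_div hp0.ne' hq0.ne'] at h1'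
  rw [Real.log_div hp1'.ne' hq1'.ne'] at h2'
  have key : -(q * Real.log q) - (1 - q) * Real.log (1 - q) ≤
      (-(p * Real.log p) - (1 - p) * Real.log (1 - p)) +
        (q - p) * (Real.log (1 - p) - Real.log p) := by nlinarith [h1', h2']
  have hrw : ∀ x : ℝ, Real.logb 2 x = Real.log x / Real.log 2 := fun x => rfl
  unfold H2
  rw [Real.logb_div hp1'.ne' hp0.ne']
  simp only [hrw]
  rw [div_sub_div_same] at *
  calc -(q * (Real.log q / Real.log 2)) - (1 - q) * (Real.log (1 - q) / Real.log 2)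
      = (-(q * Real.log q) - (1 - q) * Real.log (1 - q)) / Real.log 2 := by ring
    _ ≤ ((-(p * Real.log p) - (1 - p) * Real.log (1 - p)) +
        (q - p) * (Real.log (1 - p) - Real.log p)) / Real.log 2 := by
        exact (div_le_div_iff_of_pos_right hlog2).mpr key
    _ = -(p * (Real.log p / Real.log 2)) - (1 - p) * (Real.log (1 - p) / Real.log 2) +
        (q - p) * ((Real.log (1 - p) - Real.log p) / Real.log 2) := by ring

/-- The capacity of the binary asymmetric channel (the maximum over `α ∈ [0,1]` of the
mutual information) equals `log₂(1+2^K) - P₀ K - H_b(P₀)` with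
`K = (H_b(P₁)-H_b(P₀))/(P₀+P₁-1)`. -/
theorem bac_capacity
    (P₀ P₁ : ℝ) (hP₀ : P₀ ∈ Set.Ioo (0 : ℝ) 1) (hP₁ : P₁ ∈ Set.Ioo (0 : ℝ) 1)
    (hsum : 1 < P₀ + P₁)
    (K : ℝ) (hK : K = (H2 P₁ - H2 P₀) / (P₀ + P₁ - 1)) :
    IsGreatest (bacMI P₀ P₁ '' Set.Icc 0 1)
      (Real.logb 2 (1 + (2 : ℝ) ^ K) - P₀ * K - H2 P₀) := by
  obtain ⟨hP₀0, hP₀1⟩ := hP₀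
  obtain ⟨hP₁0, hP₁1⟩ := hP₁
  set s : ℝ := P₀ + P₁ - 1 with hs_def
  set t : ℝ := (2:ℝ) ^ K with ht_def
  set qs : ℝ := 1 / (1 + t) with hqs_def
  set L : ℝ := Real.logb 2 (1 + t) with hL_def
  clear_value s t qs L
  have hs : (0:ℝ) < s := by rw [hs_def]; linarith
  have ht : 0 < t := by rw [ht_def]; exact Real.rpow_pos_of_pos (by norm_num) K
  have ht1 : 0 < 1 + t := by linarith
  have hqs0 : 0 < qs := by rw [hqs_def]; exact div_pos one_pos ht1
  have hqs1 : qs < 1 := by rw [hqs_def, div_lt_one ht1]; linarith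
  have hb2 : (1:ℝ) < 2 := one_lt_two
  have hsK : H2 P₁ - H2 P₀ = s * K := by rw [hK]; field_simp
  have hKt : Real.logb 2 t = K := by
    rw [ht_def]; exact Real.logb_rpow (by norm_num) (by norm_num)
  have hfrac : (1 - qs) / qs = t := by
    rw [hqs_def]; field_simp; ring
  have e1 : Real.logb 2 qs = -L := by
    rw [hqs_def, one_div, Real.logb_inv, hL_def]
  have e2 : Real.logb 2 (1 - qs) = K - L := by
    have h1qs : 1 - qs = t / (1 + t) := by rw [hqs_def]; field_simp; ring
    rw [h1qs, Real.logb_div ht.ne' ht1.ne', hKt, hL_def]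
  have hH2qs : H2 qs - K * qs = L - K := by
    unfold H2; rw [e1, e2]; ring
  -- key pointwise inequality
  have hkey : ∀ q : ℝ, q ∈ Set.Ioo (0:ℝ) 1 → H2 q - K * q ≤ L - K := by
    intro q hq
    have h := H2_tangent ⟨hqs0, hqs1⟩ hq
    rw [hfrac, hKt] at h
    nlinarith [hH2qs, h]
  -- bounds on qs : 1 - P₀ ≤ qs ≤ P₁
  have hub : K ≤ Real.logb 2 (P₀ / (1 - P₀)) := by
    have h := H2_tangent (p := 1 - P₀) (q := P₁)
      ⟨by linarith, by linarith⟩ ⟨hP₁0, hP₁1⟩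
    rw [H2_symm] at h
    have h1 : 1 - (1 - P₀) = P₀ := by ring
    rw [h1] at h
    have h2 : P₁ - (1 - P₀) = s := by rw [hs_def]; ring
    rw [h2] at h
    have h3 : s * K ≤ s * Real.logb 2 (P₀ / (1 - P₀)) := by linarith
    exact (mul_le_mul_iff_right₀ hs).mp h3
  have hlb : Real.logb 2 ((1 - P₁) / P₁) ≤ K := by
    have h := H2_tangent (p := P₁) (q := 1 - P₀)
      ⟨hP₁0, hP₁1⟩ ⟨by linarith, by linarith⟩
    rw [H2_symm] at h
    have h2 : 1 - P₀ - P₁ = -s := by rw [hs_def]; ring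
    rw [h2] at h
    have h3 : s * Real.logb 2 ((1 - P₁) / P₁) ≤ s * K := by nlinarith [h, hsK]
    exact (mul_le_mul_iff_right₀ hs).mp h3
  have htub : t ≤ P₀ / (1 - P₀) := by
    calc t = (2:ℝ) ^ K := ht_def
      _ ≤ (2:ℝ) ^ Real.logb 2 (P₀ / (1 - P₀)) :=
          (Real.rpow_le_rpow_left_iff hb2).mpr hub
      _ = P₀ / (1 - P₀) := Real.rpow_logb (by norm_num) (by norm_num)
          (div_pos hP₀0 (by linarith))
  have htlb : (1 - P₁) / P₁ ≤ t := by
    calc (1 - P₁) / P₁ = (2:ℝ) ^ Real.logb 2 ((1 - P₁) / P₁) :=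
          (Real.rpow_logb (by norm_num) (by norm_num)
            (div_pos (by linarith) hP₁0)).symm
      _ ≤ (2:ℝ) ^ K := (Real.rpow_le_rpow_left_iff hb2).mpr hlb
      _ = t := ht_def.symm
  have hq_lb : 1 - P₀ ≤ qs := by
    rw [hqs_def, le_div_iff₀ ht1]
    have h4 : t * (1 - P₀) ≤ P₀ := (le_div_iff₀ (by linarith)).mp htub
    nlinarith
  have hq_ub : qs ≤ P₁ := by
    rw [hqs_def, div_le_iff₀ ht1]
    have h4 : 1 - P₁ ≤ t * P₁ := (div_le_iff₀ hP₁0).mp htlb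
    nlinarith
  constructor
  · -- membership
    refine ⟨(qs - (1 - P₀)) / s, ⟨div_nonneg (by linarith) hs.le, ?_⟩, ?_⟩
    · rw [div_le_one hs, hs_def]; linarith
    · set a : ℝ := (qs - (1 - P₀)) / s with ha_def
      clear_value a
      have has : a * s = qs - (1 - P₀) := by
        rw [ha_def]; field_simp
      have hq : a * P₁ + (1 - a) * (1 - P₀) = qs := by
        linear_combination has - a * hs_def
      unfold bacMI
      rw [hq]
      have hdiff : a * (H2 P₁ - H2 P₀) = (qs - (1 - P₀)) * K := by
        rw [hsK, ← has]; ring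
      linear_combination hH2qs - hdiff
  · -- upper bound
    rintro v ⟨α, ⟨hα0, hα1⟩, rfl⟩
    set q : ℝ := α * P₁ + (1 - α) * (1 - P₀) with hq_def
    clear_value q
    have hαs : α * s = q - (1 - P₀) := by rw [hq_def, hs_def]; ring
    have hq0 : 0 < q := by linarith [mul_nonneg hα0 hs.le, hαs]
    have hq1 : q < 1 := by
      have h5 : α * s ≤ s := mul_le_of_le_one_left hs.le hα1
      linarith [hαs, hs_def]
    have hmi : bacMI P₀ P₁ α = H2 q - H2 P₀ - α * (H2 P₁ - H2 P₀) := by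
      unfold bacMI; rw [← hq_def]; ring
    have hαK : α * (H2 P₁ - H2 P₀) = (q - (1 - P₀)) * K := by
      rw [hsK, ← hαs]; ring
    have h := hkey q ⟨hq0, hq1⟩
    linarith [h, hαK, hmi]
end

section
/- The capacity of the Z-channel with correct-transmission probability P₁ ∈ (0,1) for input 1 (and input 0 always transmitted correctly) equals log₂(1 + 2^{-H_b(P₁)/P₁}). -/
open Real

/-- Mutual information of the Z-channel (`W(0|0)=1`, `W(1|1)=P₁`) when the input is `1`
with probability `α`: `I = H(Y) - H(Y|X) = H_b(αP₁) - α H_b(P₁)`. -/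
noncomputable def zMI (P₁ α : ℝ) : ℝ := H2 (α * P₁) - α * H2 P₁

private lemma gibbs_nat (p t : ℝ) (hp0 : 0 ≤ p) (hp1 : p ≤ 1) (ht0 : 0 < t) (ht1 : t < 1) :
    -(p * Real.log p) - (1 - p) * Real.log (1 - p) ≤
      -(p * Real.log t) - (1 - p) * Real.log (1 - t) := by
  rcases eq_or_lt_of_le hp0 with h0 | h0
  · have hlt : Real.log (1 - t) ≤ 0 := Real.log_nonpos (by linarith) (by linarith)
    rw [← h0]
    norm_num
    linarith
  rcases eq_or_lt_of_le hp1 with h1 | h1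
  · have hlt : Real.log t ≤ 0 := Real.log_nonpos ht0.le ht1.le
    rw [h1]
    norm_num
    linarith
  · have hp1' : (0:ℝ) < 1 - p := by linarith
    have ht1' : (0:ℝ) < 1 - t := by linarith
    have key1 : Real.log t - Real.log p ≤ t / p - 1 := by
      have := Real.log_le_sub_one_of_pos (show 0 < t / p from div_pos ht0 h0)
      rwa [Real.log_div ht0.ne' h0.ne'] at this
    have key2 : Real.log (1 - t) - Real.log (1 - p) ≤ (1 - t) / (1 - p) - 1 := by
      have := Real.log_le_sub_one_of_pos (show 0 < (1 - t) / (1 - p) from div_pos ht1' hp1')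
      rwa [Real.log_div ht1'.ne' hp1'.ne'] at this
    have e1 : p * (t / p - 1) = t - p := by field_simp
    have e2 : (1 - p) * ((1 - t) / (1 - p) - 1) = p - t := by
      field_simp
      ring
    nlinarith [mul_le_mul_of_nonneg_left key1 h0.le,
      mul_le_mul_of_nonneg_left key2 hp1'.le]

private lemma gibbs (p t : ℝ) (hp0 : 0 ≤ p) (hp1 : p ≤ 1) (ht0 : 0 < t) (ht1 : t < 1) :
    H2 p ≤ -(p * Real.logb 2 t) - (1 - p) * Real.logb 2 (1 - t) := by
  have hlog2 : (0:ℝ) < Real.log 2 := Real.log_pos one_lt_two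
  have := gibbs_nat p t hp0 hp1 ht0 ht1
  unfold H2
  simp only [Real.logb, div_eq_mul_inv]
  rw [show -(p * (Real.log p * (Real.log 2)⁻¹)) - (1 - p) * (Real.log (1 - p) * (Real.log 2)⁻¹)
      = (-(p * Real.log p) - (1 - p) * Real.log (1 - p)) * (Real.log 2)⁻¹ by ring,
    show -(p * (Real.log t * (Real.log 2)⁻¹)) - (1 - p) * (Real.log (1 - t) * (Real.log 2)⁻¹)
      = (-(p * Real.log t) - (1 - p) * Real.log (1 - t)) * (Real.log 2)⁻¹ by ring]
  exact mul_le_mul_of_nonneg_right this (by positivity)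

/-- The capacity of the Z-channel with correct-transmission probability `P₁ ∈ (0,1)` for
input `1` equals `log₂(1 + 2^{-H_b(P₁)/P₁})`. -/
theorem z_channel_capacity
    (P₁ : ℝ) (hP₁ : P₁ ∈ Set.Ioo (0 : ℝ) 1) :
    IsGreatest (zMI P₁ '' Set.Icc 0 1)
      (Real.logb 2 (1 + (2 : ℝ) ^ (-(H2 P₁) / P₁))) := by
  obtain ⟨hP0, hP1⟩ := hP₁
  set H : ℝ := H2 P₁ with hH
  set s : ℝ := (2 : ℝ) ^ (H / P₁) with hsdef
  have hs : (0:ℝ) < s := Real.rpow_pos_of_pos two_pos _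
  have h1s : (0:ℝ) < 1 + s := by linarith
  set t : ℝ := 1 / (1 + s) with htdef
  have ht0 : 0 < t := by rw [htdef]; positivity
  have ht1 : t < 1 := by rw [htdef, div_lt_one h1s]; linarith
  set L : ℝ := Real.logb 2 (1 + s) with hLdef
  have hlogs : Real.logb 2 s = H / P₁ := Real.logb_rpow two_pos (by norm_num)
  have hlogt : Real.logb 2 t = -L := by
    rw [htdef, one_div, Real.logb_inv, hLdef]
  have h1mt : 1 - t = s / (1 + s) := by
    rw [htdef]; field_simp; ring
  have hlog1mt : Real.logb 2 (1 - t) = H / P₁ - L := by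
    rw [h1mt, Real.logb_div hs.ne' h1s.ne', hlogs, hLdef]
  have hC : Real.logb 2 (1 + (2 : ℝ) ^ (-H / P₁)) = L - H / P₁ := by
    have h2 : (2 : ℝ) ^ (-H / P₁) = s⁻¹ := by
      rw [hsdef, ← Real.rpow_neg (by norm_num : (0:ℝ) ≤ 2), neg_div]
    rw [h2, show 1 + s⁻¹ = (1 + s) / s by field_simp; ring,
      Real.logb_div h1s.ne' hs.ne', hlogs, hLdef]
  constructor
  · -- membership: attained at α = t / P₁
    refine ⟨t / P₁, ⟨by positivity, ?_⟩, ?_⟩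
    · -- t / P₁ ≤ 1, i.e. t ≤ P₁
      rw [div_le_one hP0]
      have hl1 : Real.logb 2 (1 - P₁) ≤ 0 :=
        Real.logb_nonpos one_lt_two (by linarith) (by linarith)
      have key : P₁ * (Real.logb 2 (1 - P₁) - Real.logb 2 P₁) ≤ H := by
        rw [hH]; unfold H2; nlinarith
      have hle : Real.logb 2 ((1 - P₁) / P₁) ≤ H / P₁ := by
        rw [Real.logb_div (by linarith : (1:ℝ) - P₁ ≠ 0) hP0.ne', le_div_iff₀ hP0]
        nlinarith
      have hq : (0:ℝ) < (1 - P₁) / P₁ := div_pos (by linarith) hP0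
      have hss : (1 - P₁) / P₁ ≤ s := by
        calc (1 - P₁) / P₁ = (2:ℝ) ^ Real.logb 2 ((1 - P₁) / P₁) :=
              (Real.rpow_logb two_pos (by norm_num) hq).symm
          _ ≤ (2:ℝ) ^ (H / P₁) := by
              rw [Real.rpow_le_rpow_left_iff one_lt_two]; exact hle
          _ = s := hsdef.symm
      have hss' : 1 - P₁ ≤ s * P₁ := by
        rw [div_le_iff₀ hP0] at hss; linarith
      rw [htdef, div_le_iff₀ h1s]
      nlinarith
    · -- value equals capacity
      have hαP : t / P₁ * P₁ = t := by field_simp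
      have hH2t : H2 t = L - (1 - t) * (H / P₁) := by
        unfold H2; rw [hlogt, hlog1mt]; ring
      show H2 (t / P₁ * P₁) - t / P₁ * H2 P₁ = _
      rw [hαP, ← hH, hH2t, hC]
      field_simp
      ring
  · rintro y ⟨α, ⟨hα0, hα1⟩, rfl⟩
    have hαP0 : 0 ≤ α * P₁ := mul_nonneg hα0 hP0.le
    have hαP1 : α * P₁ ≤ 1 := by nlinarith
    have hb := gibbs (α * P₁) t hαP0 hαP1 ht0 ht1
    rw [hlogt, hlog1mt] at hb
    show H2 (α * P₁) - α * H2 P₁ ≤ _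
    rw [← hH, hC]
    have hid : -(α * P₁ * -L) - (1 - α * P₁) * (H / P₁ - L) - α * H = L - H / P₁ := by
      field_simp
      ring
    linarith
end
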